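/- Let p be a prime with p ≡ 3 (mod 4) and p > 3. Then the polynomial F(X) = X^{p+(p−1)/2} + X^{p−1} + X^{(p−3)/2} + 1 ∈ F_p[X] is squarefree, and F(x) is a nonzero square in F_p for every x ∈ F_p. -/

import Mathlib

open Polynomial

/-- For a prime `p ≡ 3 (mod 4)`, `p > 3`, the polynomial
`X^{p+(p−1)/2} + X^{p−1} + X^{(p−3)/2} + 1 ∈ F_p[X]` is squarefree and all its values on `F_p`
are nonzero squares. -/
theorem stmt_10 (p : ℕ) (hp : p.Prime) (hmod : p % 4 = 3) (hp3 : 3 < p) :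
    Squarefree ((X : Polynomial (ZMod p)) ^ (p + (p - 1) / 2)
        + X ^ (p - 1) + X ^ ((p - 3) / 2) + 1) ∧
    ∀ x : ZMod p, ∃ y : ZMod p, y ≠ 0 ∧
      ((X : Polynomial (ZMod p)) ^ (p + (p - 1) / 2)
          + X ^ (p - 1) + X ^ ((p - 3) / 2) + 1).eval x = y ^ 2 := by
  have hp7 : 7 ≤ p := by omega
  obtain ⟨j, rfl⟩ : ∃ j, p = 4 * j + 7 := ⟨p / 4 - 1, by omega⟩
  haveI : Fact (Nat.Prime (4 * j + 7)) := ⟨hp⟩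
  rw [show 4 * j + 7 + (4 * j + 7 - 1) / 2 = 6 * j + 10 from by omega,
    show 4 * j + 7 - 1 = 4 * j + 6 from by omega,
    show (4 * j + 7 - 3) / 2 = 2 * j + 2 from by omega]
  set R := ZMod (4 * j + 7)
  set F : R[X] := X ^ (6 * j + 10) + X ^ (4 * j + 6) + X ^ (2 * j + 2) + 1 with hF
  have hder : derivative F = C ((6*j+10 : ℕ) : R) * X ^ (6*j+9)
      + C ((4*j+6 : ℕ) : R) * X ^ (4*j+5) + C ((2*j+2 : ℕ) : R) * X ^ (2*j+1) := by
    simp only [hF, derivative_add, derivative_one, derivative_X_pow, add_zero,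
      show 6*j+10-1 = 6*j+9 from by omega, show 4*j+6-1 = 4*j+5 from by omega,
      show 2*j+2-1 = 2*j+1 from by omega]
  have hsf : Squarefree F := by
    apply Polynomial.Separable.squarefree
    rw [separable_def]
    set K := AlgebraicClosure R
    set φ := algebraMap R K
    rw [← isCoprime_map (φ : R →+* K)]
    by_contra hncop
    classical
    have hgu : ¬ IsUnit (EuclideanDomain.gcd (F.map φ) ((derivative F).map φ)) :=
      fun h => hncop (EuclideanDomain.gcd_isUnit_iff.mp h)
    have hdeg : (EuclideanDomain.gcd (F.map φ) ((derivative F).map φ)).degree ≠ 0 :=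
      fun h => hgu (Polynomial.isUnit_iff_degree_eq_zero.mpr h)
    obtain ⟨α, hroot⟩ := IsAlgClosed.exists_root _ hdeg
    have hF0 : (F.map φ).eval α = 0 :=
      eval_eq_zero_of_dvd_of_eval_eq_zero (EuclideanDomain.gcd_dvd_left _ _) hroot
    have hFd0 : ((derivative F).map φ).eval α = 0 :=
      eval_eq_zero_of_dvd_of_eval_eq_zero (EuclideanDomain.gcd_dvd_right _ _) hroot
    simp only [hF, Polynomial.map_add, Polynomial.map_pow, Polynomial.map_one,
      Polynomial.map_X, eval_add, eval_pow, eval_X, eval_one] at hF0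
    rw [hder] at hFd0
    simp only [Polynomial.map_add, Polynomial.map_mul, Polynomial.map_pow,
      Polynomial.map_C, Polynomial.map_X, eval_add, eval_mul, eval_pow, eval_C, eval_X,
      map_natCast, Polynomial.map_natCast, Polynomial.eval_natCast] at hFd0
    -- hF0 : α ^ (6*j+10) + α ^ (4*j+6) + α ^ (2*j+2) + 1 = 0
    -- hFd0 : (6*j+10) * α^(6*j+9) + (4*j+6) * α^(4*j+5) + (2*j+2) * α^(2*j+1) = 0
    have hα : α ≠ 0 := by
      rintro rfl
      simp [zero_pow] at hF0
    have hpK : ((4*j+7 : ℕ) : K) = 0 := by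
      have : ((4*j+7 : ℕ) : R) = 0 := by
        simpa using ZMod.natCast_self (4*j+7)
      calc ((4*j+7 : ℕ) : K) = φ ((4*j+7 : ℕ) : R) := by rw [map_natCast]
        _ = 0 := by rw [this, map_zero]
    set t : K := α ^ (2*j+4) with ht
    have hE1 : t^3 + t^2 + t + α^2 = 0 := by
      rw [ht]
      linear_combination α^2 * hF0
    have hE2 : ((6*j+10:ℕ):K) * t^3 + ((4*j+6:ℕ):K) * t^2 + ((2*j+2:ℕ):K) * t = 0 := by
      rw [ht]
      rw [map_natCast, map_natCast, map_natCast] at hFd0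
      linear_combination α^3 * hFd0
    have hc1 : (2:K) * ((6*j+10:ℕ):K) = -1 := by
      have e := congrArg (Nat.cast : ℕ → K) (show (6*j+10)+(6*j+10)+1 = (4*j+7)+(4*j+7)+(4*j+7) by ring)
      push_cast at hpK ⊢ e
      linear_combination e + 3 * hpK
    have hc2 : ((4*j+6:ℕ):K) = -1 := by
      push_cast at hpK ⊢
      linear_combination hpK
    have hc3 : (2:K) * ((2*j+2:ℕ):K) = -3 := by
      have e := congrArg (Nat.cast : ℕ → K) (show (2*j+2)+(2*j+2)+3 = 4*j+7 by ring)
      push_cast at hpK ⊢ e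
      linear_combination e + hpK
    have ht0 : t ≠ 0 := pow_ne_zero _ hα
    have h2t : t^2 + 2*t + 3 = 0 := by
      have h5 : t * (t^2 + 2*t + 3) = 0 := by
        linear_combination (-2:K) * hE2 + t^3 * hc1 + 2*t^2 * hc2 + t * hc3
      rcases mul_eq_zero.mp h5 with h | h
      · exact absurd h ht0
      · exact h
    have hα2 : α^2 = -3 := by linear_combination hE1 + (1 - t) * h2t
    -- now transport to R
    set u : R := (-3 : R) ^ (j+2) with hu
    have htu : t = φ u := by
      rw [ht, show 2*j+4 = 2*(j+2) from by ring, pow_mul, hα2, hu, map_pow]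
      congr 1
      rw [map_neg, map_ofNat]
    have hquadR : u^2 + 2*u + 3 = 0 := by
      apply φ.injective
      rw [map_add, map_add, map_mul, map_pow, ← htu, map_ofNat, map_ofNat, map_zero]
      exact h2t
    have h3ne : (-3 : R) ≠ 0 := by
      intro h
      have h3 : ((3:ℕ) : R) = 0 := by push_cast; linear_combination -h
      rw [ZMod.natCast_eq_zero_iff] at h3
      have := Nat.le_of_dvd (by norm_num) h3
      omega
    have hu4 : u^4 = 9 := by
      rw [hu, ← pow_mul, show (j+2)*4 = (4*j+6)+2 from by ring, pow_add]
      have : (-3 : R) ^ (4*j+6) = 1 := by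
        have := ZMod.pow_card_sub_one_eq_one h3ne
        rwa [show 4*j+7-1 = 4*j+6 from by omega] at this
      rw [this, one_mul]
      norm_num
    have h6 : (u^2 - 3) * (u^2 + 3) = 0 := by linear_combination hu4
    have h2ne : (2 : R) ≠ 0 := by
      intro h
      have h2 : ((2:ℕ) : R) = 0 := by push_cast; exact h
      rw [ZMod.natCast_eq_zero_iff] at h2
      have := Nat.le_of_dvd (by norm_num) h2
      omega
    rcases mul_eq_zero.mp h6 with h | h
    · -- u^2 = 3
      have hu3 : u = -3 := by
        apply mul_left_cancel₀ h2ne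
        linear_combination hquadR - h
      have : (6 : R) = 0 := by
        rw [hu3] at h
        linear_combination h
      have h6' : ((6:ℕ) : R) = 0 := by push_cast; exact this
      rw [ZMod.natCast_eq_zero_iff] at h6'
      have := Nat.le_of_dvd (by norm_num) h6'
      omega
    · -- u^2 = -3
      have hu0 : u = 0 := by
        apply mul_left_cancel₀ h2ne
        rw [mul_zero]
        linear_combination hquadR - h
      apply h3ne
      rw [hu0] at h
      linear_combination -h
  have key : ∀ x : R, ∃ y : R, y ≠ 0 ∧ F.eval x = y ^ 2 := by
    intro x
    by_cases hx : x = 0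
    · refine ⟨1, one_ne_zero, ?_⟩
      simp [hF, hx, zero_pow]
    · have hx1 : x ^ (4 * j + 6) = 1 := by
        have := ZMod.pow_card_sub_one_eq_one hx
        rwa [show 4 * j + 7 - 1 = 4 * j + 6 from by omega] at this
      have hs2 : (x ^ (2 * j + 3)) ^ 2 = 1 := by
        rw [← pow_mul, show (2 * j + 3) * 2 = 4 * j + 6 from by ring]; exact hx1
      have hno : ¬ IsSquare (-1 : R) := by
        rw [ZMod.exists_sq_eq_neg_one_iff]; omega
      have heval : F.eval x = x ^ (4 * j + 6) * x ^ (2 * j + 3) * x + x ^ (4 * j + 6) + x ^ (2 * j + 2) + 1 := by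
        simp only [hF, eval_add, eval_pow, eval_X, eval_one, ← pow_add, ← pow_succ]
        ring_nf
      have hsq : ∃ y₀ : R, y₀ ≠ 0 ∧ (x ^ (2*j+3) = 1 ∧ x = y₀ * y₀ ∨ x ^ (2*j+3) = -1 ∧ x = -(y₀ * y₀)) := by
        rcases sq_eq_one_iff.mp hs2 with hs | hs
        · obtain ⟨y₀, hy₀⟩ := (ZMod.euler_criterion (4*j+7) hx).mpr
            (by rwa [show (4*j+7)/2 = 2*j+3 from by omega])
          refine ⟨y₀, fun h => hx (by simp [hy₀, h]), Or.inl ⟨hs, hy₀⟩⟩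
        · obtain ⟨y₀, hy₀⟩ := (ZMod.euler_criterion (4*j+7) (neg_ne_zero.mpr hx)).mpr
            (by rw [show (4*j+7)/2 = 2*j+3 from by omega, Odd.neg_pow ⟨j+1, by ring⟩, hs, neg_neg])
          refine ⟨y₀, fun h => hx (by simpa [h] using hy₀), Or.inr ⟨hs, by linear_combination -hy₀⟩⟩
      obtain ⟨y₀, hy₀, hc⟩ := hsq
      refine ⟨y₀ + y₀⁻¹, ?_, ?_⟩
      · intro h
        apply hno
        refine ⟨y₀, ?_⟩
        have : y₀ * y₀ + 1 = 0 := by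
          have := congrArg (· * y₀) h
          simp only [add_mul, inv_mul_cancel₀ hy₀, zero_mul] at this
          linear_combination this
        linear_combination -this
      · rw [heval]
        rcases hc with ⟨hs, hxe⟩ | ⟨hs, hxe⟩ <;>
        · have h22 : x ^ (2*j+2) * x = x ^ (2*j+3) := by rw [← pow_succ]
          have hxinv : x ^ (2*j+2) = x^(2*j+3) * x⁻¹ := by
            rw [← h22, mul_inv_cancel_right₀ hx]
          rw [hx1, one_mul, hs, hxinv, hs, hxe]
          simp only [inv_neg, mul_inv]
          linear_combination (-2) * mul_inv_cancel₀ hy₀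
  exact ⟨hsf, key⟩
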